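/- For all real parameters η > 0, φ > 0 and every natural number r, the r-th raw moment of the Copoun distribution is ∫₀^∞ λ^r·(η²/(φ+η))·(1 + φη²λ³/6)·e^{-ηλ} dλ = (r! / (η^r(φ+η)))·[η + (φ/6)(r+1)(r+2)(r+3)]. -/

import Mathlib

open Real MeasureTheory Set

lemma pow_exp_integrable (b : ℝ) (hb : 0 < b) (n : ℕ) :
    IntegrableOn (fun x : ℝ => x ^ n * Real.exp (-b * x)) (Ioi 0) := by
  have h := integrableOn_rpow_mul_exp_neg_mul_rpow (p := 1) (s := (n : ℝ)) (b := b)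
    (by exact neg_lt_zero.mpr one_pos |>.trans_le (Nat.cast_nonneg n)) one_pos hb
  refine h.congr_fun (fun x hx => ?_) measurableSet_Ioi
  beta_reduce
  rw [Real.rpow_natCast, Real.rpow_one]

lemma pow_exp_integral (b : ℝ) (hb : 0 < b) (n : ℕ) :
    ∫ x in Ioi (0 : ℝ), x ^ n * Real.exp (-b * x)
      = (Nat.factorial n : ℝ) / b ^ (n + 1) := by
  have h := integral_rpow_mul_exp_neg_mul_rpow (p := 1) (q := (n : ℝ)) (b := b)
    one_pos (neg_lt_zero.mpr one_pos |>.trans_le (Nat.cast_nonneg n)) hb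
  rw [show (∫ x in Ioi (0:ℝ), x ^ n * Real.exp (-b * x))
      = ∫ x in Ioi (0:ℝ), x ^ ((n:ℝ)) * Real.exp (-b * x ^ (1:ℝ)) from
    setIntegral_congr_fun measurableSet_Ioi (fun x hx => by
      rw [Real.rpow_natCast, Real.rpow_one]), h]
  rw [div_one, div_one, div_one, Real.Gamma_nat_eq_factorial]
  rw [show (-(((n:ℝ)) + 1)) = -((n + 1 : ℕ) : ℝ) by push_cast; ring,
    Real.rpow_neg hb.le, Real.rpow_natCast]
  field_simp

/-- The r-th raw moment of the Copoun distribution. -/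
theorem copoun_raw_moment (η φ : ℝ) (hη : 0 < η) (hφ : 0 < φ) (r : ℕ) :
    ∫ l in Set.Ioi (0 : ℝ),
      l ^ r * ((η ^ 2 / (φ + η)) * (1 + φ * η ^ 2 * l ^ 3 / 6) * Real.exp (-η * l))
      = ((Nat.factorial r : ℝ) / (η ^ r * (φ + η)))
          * (η + (φ / 6) * ((r : ℝ) + 1) * ((r : ℝ) + 2) * ((r : ℝ) + 3)) := by
  have hφη : 0 < φ + η := by linarith
  set c1 : ℝ := η ^ 2 / (φ + η) with hc1
  set c2 : ℝ := η ^ 2 / (φ + η) * (φ * η ^ 2 / 6) with hc2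
  have key : ∀ l : ℝ, l ∈ Ioi (0:ℝ) →
      l ^ r * (c1 * (1 + φ * η ^ 2 * l ^ 3 / 6) * Real.exp (-η * l))
      = c1 * (l ^ r * Real.exp (-η * l)) + c2 * (l ^ (r + 3) * Real.exp (-η * l)) := by
    intro l _
    rw [hc1, hc2, pow_add]
    ring
  rw [setIntegral_congr_fun measurableSet_Ioi key, integral_add
    ((pow_exp_integrable η hη r).const_mul c1)
    ((pow_exp_integrable η hη (r + 3)).const_mul c2),
    MeasureTheory.integral_const_mul, MeasureTheory.integral_const_mul, pow_exp_integral η hη r,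
    pow_exp_integral η hη (r + 3)]
  have hf3 : (Nat.factorial (r + 3) : ℝ)
      = (Nat.factorial r : ℝ) * ((r : ℝ) + 1) * ((r : ℝ) + 2) * ((r : ℝ) + 3) := by
    rw [show r + 3 = (r + 2) + 1 from rfl, Nat.factorial_succ,
      show r + 2 = (r + 1) + 1 from rfl, Nat.factorial_succ, Nat.factorial_succ]
    push_cast; ring
  rw [hc1, hc2, hf3]
  have hηr : (η : ℝ) ^ r ≠ 0 := pow_ne_zero _ hη.ne'
  field_simp
  ring
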